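/- Let L = ℕ ∪ {ω, a} ordered by: the usual order on ℕ, and x ≤ ω for all x ∈ L (with a incomparable to all naturals). Then L has weak one-step closure but not one-step closure; in particular ℕ' = ℕ ∪ {ω} while ℕ'' = L. -/

import Mathlib

open Set

section OrderDefs

variable {L : Type*} [Preorder L]

/-- Downward closure `↓A`. -/
def dw (A : Set L) : Set L := {x | ∃ a ∈ A, x ≤ a}

/-- Upward closure `↑A`. -/
def up (A : Set L) : Set L := {x | ∃ a ∈ A, a ≤ x}

/-- Scott closure of a set. -/
def scottCl (A : Set L) : Set L := @closure L (Topology.scott L Set.univ) A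

/-- `A' = {x : ∃ directed D ⊆ ↓A with x = sup D}`. -/
def oneStep (A : Set L) : Set L :=
  {x | ∃ D : Set L, D ⊆ dw A ∧ D.Nonempty ∧ DirectedOn (· ≤ ·) D ∧ IsLUB D x}

/-- `A'' = {x : ∃ directed D ⊆ ↓A with x ≤ sup D}`. -/
def weakOneStep (A : Set L) : Set L :=
  {x | ∃ D : Set L, D ⊆ dw A ∧ D.Nonempty ∧ DirectedOn (· ≤ ·) D ∧ ∃ y, IsLUB D y ∧ x ≤ y}

/-- A poset has one-step closure if `cl(A) = A'` for all `A`. -/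
def HasOneStepClosure (L : Type*) [Preorder L] : Prop :=
  ∀ A : Set L, scottCl A = oneStep A

/-- A poset has weak one-step closure if `cl(A) = A''` for all `A`. -/
def HasWeakOneStepClosure (L : Type*) [Preorder L] : Prop :=
  ∀ A : Set L, scottCl A = weakOneStep A

/-- Meet continuity: `x ≤ sup D` implies `x ∈ cl(↓D ∩ ↓x)`. -/
def MeetContinuous (L : Type*) [Preorder L] : Prop :=
  ∀ x : L, ∀ D : Set L, D.Nonempty → DirectedOn (· ≤ ·) D → ∀ s, IsLUB D s → x ≤ s →
    x ∈ scottCl (dw D ∩ dw ({x} : Set L))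

/-- The way-below relation `x ≪ y`. -/
def wayBelow (x y : L) : Prop :=
  ∀ D : Set L, D.Nonempty → DirectedOn (· ≤ ·) D → ∀ s, IsLUB D s → y ≤ s →
    (D ∩ up ({x} : Set L)).Nonempty

/-- The weakly way-below relation `x ≪_w y`. -/
def weaklyWayBelow (x y : L) : Prop :=
  ∀ D : Set L, D.Nonempty → DirectedOn (· ≤ ·) D → IsLUB D y →
    (D ∩ up ({x} : Set L)).Nonempty

/-- A continuous poset: each `⇓x` is directed with supremum `x`. -/
def ContinuousPoset (L : Type*) [Preorder L] : Prop :=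
  ∀ x : L, {y | wayBelow y x}.Nonempty ∧ DirectedOn (· ≤ ·) {y | wayBelow y x} ∧
    IsLUB {y | wayBelow y x} x

/-- An exact poset: each `⇓_w x` is directed with supremum `x`. -/
def ExactPoset (L : Type*) [Preorder L] : Prop :=
  ∀ x : L, {y | weaklyWayBelow y x}.Nonempty ∧ DirectedOn (· ≤ ·) {y | weaklyWayBelow y x} ∧
    IsLUB {y | weaklyWayBelow y x} x

/-- `F ≪ x` for a set `F`: every directed `D` with `sup D ≥ x` meets `↑F`. -/
def finWayBelow (F : Set L) (x : L) : Prop :=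
  ∀ D : Set L, D.Nonempty → DirectedOn (· ≤ ·) D → ∀ s, IsLUB D s → x ≤ s →
    (D ∩ up F).Nonempty

/-- A quasicontinuous poset: each `fin(x)` is a directed family (Smyth preorder)
with `↑x = ⋂_{F ∈ fin(x)} ↑F`. -/
def QuasicontinuousPoset (L : Type*) [Preorder L] : Prop :=
  ∀ x : L, {F : Set L | F.Finite ∧ finWayBelow F x}.Nonempty ∧
    DirectedOn (fun F G => up G ⊆ up F) {F : Set L | F.Finite ∧ finWayBelow F x} ∧
    up ({x} : Set L) = ⋂ F ∈ {F : Set L | F.Finite ∧ finWayBelow F x}, up F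

/-- A dcpo: every (nonempty) directed subset has a least upper bound. -/
def IsDcpo (L : Type*) [Preorder L] : Prop :=
  ∀ D : Set L, D.Nonempty → DirectedOn (· ≤ ·) D → ∃ x, IsLUB D x

end OrderDefs

/-- The poset `L = ℕ ∪ {ω, a}`: the usual order on `ℕ`, `x ≤ ω` for all `x`, and `a`
incomparable with all naturals. -/
inductive L₈ : Type where
  | nat : ℕ → L₈
  | omega : L₈
  | a : L₈

namespace L₈

protected def le : L₈ → L₈ → Prop
  | nat j, nat k => j ≤ k
  | _, omega => True
  | a, a => True
  | _, _ => False

instance : PartialOrder L₈ where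
  le := L₈.le
  le_refl x := by cases x <;> simp [L₈.le]
  le_trans x y z hxy hyz := by
    cases x <;> cases y <;> cases z <;> simp_all [L₈.le] <;> omega
  le_antisymm x y hxy hyx := by
    cases x <;> cases y <;> simp_all [L₈.le] <;> omega

end L₈

section ScottHelpers

variable {α : Type*} [Preorder α]

lemma scottCl_facts (A : Set α) :
    A ⊆ scottCl A ∧ IsLowerSet (scottCl A) ∧ DirSupClosed (scottCl A) := by
  letI := Topology.scott α Set.univ
  haveI : Topology.IsScott α Set.univ := ⟨rfl⟩
  have h := (Topology.IsScott.isClosed_iff_isLowerSet_and_dirSupClosed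
    (s := closure A)).mp isClosed_closure
  exact ⟨subset_closure, h.1, h.2⟩

lemma weakOneStep_subset_scottCl (A : Set α) : weakOneStep A ⊆ scottCl A := by
  obtain ⟨hsub, hlow, hdir⟩ := scottCl_facts A
  rintro x ⟨D, hDA, hne, hdirD, y, hy, hxy⟩
  have hDsub : D ⊆ scottCl A := fun d hd => by
    obtain ⟨b, hb, hdb⟩ := hDA hd
    exact hlow hdb (hsub hb)
  exact hlow hxy (hdir hDsub hne hdirD hy)

lemma self_subset_weakOneStep (A : Set α) : A ⊆ weakOneStep A := by
  intro x hx
  refine ⟨{x}, ?_, ⟨x, rfl⟩, ?_, x, isLUB_singleton, le_refl x⟩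
  · exact fun z hz => ⟨x, hx, le_of_eq hz⟩
  · exact fun u hu v hv => ⟨x, rfl, le_of_eq hu, le_of_eq hv⟩

lemma weakOneStep_isLowerSet (A : Set α) : IsLowerSet (weakOneStep A) := by
  rintro x x' hle ⟨D, h1, h2, h3, y, hy, hxy⟩
  exact ⟨D, h1, h2, h3, y, hy, hle.trans hxy⟩

lemma scottCl_subset_of {A C : Set α} (hAC : A ⊆ C) (hlow : IsLowerSet C)
    (hdsc : DirSupClosed C) : scottCl A ⊆ C := by
  letI := Topology.scott α Set.univ
  haveI : Topology.IsScott α Set.univ := ⟨rfl⟩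
  exact closure_minimal hAC
    (Topology.IsScott.isClosed_iff_isLowerSet_and_dirSupClosed.mpr ⟨hlow, hdsc⟩)

end ScottHelpers

namespace L₈

lemma nat_le_nat {j k : ℕ} : (L₈.nat j ≤ L₈.nat k) ↔ j ≤ k := Iff.rfl

lemma le_omega (x : L₈) : x ≤ L₈.omega := by cases x <;> exact trivial

lemma not_nat_le_a (n : ℕ) : ¬ (L₈.nat n ≤ L₈.a) := id

lemma not_a_le_nat (n : ℕ) : ¬ (L₈.a ≤ L₈.nat n) := id

lemma not_omega_le_nat (n : ℕ) : ¬ (L₈.omega ≤ L₈.nat n) := id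

lemma not_omega_le_a : ¬ (L₈.omega ≤ L₈.a) := id

/-- Classification of least upper bounds of directed sets in `L₈`. -/
lemma lub_cases {D : Set L₈} (hne : D.Nonempty) (hdir : DirectedOn (· ≤ ·) D)
    {s : L₈} (hs : IsLUB D s) :
    s ∈ D ∨ (s = L₈.omega ∧ ∀ N : ℕ, ∃ n, N < n ∧ L₈.nat n ∈ D) := by
  cases s with
  | a =>
    left
    obtain ⟨d, hd⟩ := hne
    have hda : d ≤ L₈.a := hs.1 hd
    cases d with
    | nat n => exact absurd hda (not_nat_le_a n)
    | omega => exact absurd hda not_omega_le_a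
    | a => exact hd
  | nat m =>
    left
    set S : Set ℕ := {n | L₈.nat n ∈ D} with hS
    have hSne : S.Nonempty := by
      obtain ⟨d, hd⟩ := hne
      have hdm : d ≤ L₈.nat m := hs.1 hd
      cases d with
      | nat n => exact ⟨n, hd⟩
      | omega => exact absurd hdm (not_omega_le_nat m)
      | a => exact absurd hdm (not_a_le_nat m)
    have hSbdd : BddAbove S := by
      refine ⟨m, fun n hn => ?_⟩
      exact nat_le_nat.mp (hs.1 hn)
    have hM : sSup S ∈ S := Nat.sSup_mem hSne hSbdd
    have hub : L₈.nat (sSup S) ∈ upperBounds D := by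
      intro d hd
      cases d with
      | nat n => exact nat_le_nat.mpr (le_csSup hSbdd hd)
      | omega => exact absurd (hs.1 hd) (not_omega_le_nat m)
      | a => exact absurd (hs.1 hd) (not_a_le_nat m)
    have h1 : m ≤ sSup S := nat_le_nat.mp (hs.2 hub)
    have h2 : sSup S ≤ m := nat_le_nat.mp (hs.1 hM)
    have : m = sSup S := le_antisymm h1 h2
    rw [this]; exact hM
  | omega =>
    by_cases hω : L₈.omega ∈ D
    · exact Or.inl hω
    right
    refine ⟨rfl, fun N => ?_⟩
    by_cases ha : L₈.a ∈ D
    · exfalso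
      have hnonat : ∀ n : ℕ, L₈.nat n ∉ D := by
        intro n hn
        obtain ⟨z, hz, haz, hnz⟩ := hdir _ ha _ hn
        cases z with
        | nat k => exact not_a_le_nat k haz
        | omega => exact hω hz
        | a => exact not_nat_le_a n hnz
      have hub : L₈.a ∈ upperBounds D := by
        intro d hd
        cases d with
        | nat n => exact absurd hd (hnonat n)
        | omega => exact absurd hd hω
        | a => exact le_refl _
      exact not_omega_le_a (hs.2 hub)
    · by_contra hcon
      push_neg at hcon
      have hub : L₈.nat N ∈ upperBounds D := by
        intro d hd
        cases d with
        | nat n =>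
          have : n ≤ N := by
            by_contra h
            exact absurd hd (hcon n (by omega))
          exact nat_le_nat.mpr this
        | omega => exact absurd hd hω
        | a => exact absurd hd ha
      exact not_omega_le_nat N (hs.2 hub)

/-- If `nat n` lies in `A''` then some `nat m` with `n ≤ m` lies in `↓A`. -/
lemma nat_mem_weakOneStep {A : Set L₈} {n : ℕ} (h : L₈.nat n ∈ weakOneStep A) :
    ∃ m, n ≤ m ∧ L₈.nat m ∈ dw A := by
  obtain ⟨D, hDA, hne, hdir, y, hy, hle⟩ := h
  rcases lub_cases hne hdir hy with hyD | ⟨rfl, hub⟩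
  · have hydw : y ∈ dw A := hDA hyD
    cases y with
    | nat m => exact ⟨m, nat_le_nat.mp hle, hydw⟩
    | omega =>
      obtain ⟨b, hb, hob⟩ := hydw
      exact ⟨n, le_refl n, ⟨b, hb, (le_omega _).trans hob⟩⟩
    | a => exact absurd hle (not_nat_le_a n)
  · obtain ⟨m, hnm, hm⟩ := hub n
    exact ⟨m, le_of_lt hnm, hDA hm⟩

lemma weakOneStep_dirSupClosed (A : Set L₈) : DirSupClosed (weakOneStep A) := by
  intro D hDsub hne hdir s hs
  rcases lub_cases hne hdir hs with h | ⟨rfl, hub⟩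
  · exact hDsub h
  · -- s = omega; build an unbounded chain of naturals inside ↓A
    set E : Set L₈ := {x | ∃ m : ℕ, x = L₈.nat m ∧ x ∈ dw A} with hE
    have key : ∀ N : ℕ, ∃ m, N < m ∧ L₈.nat m ∈ E := by
      intro N
      obtain ⟨n, hNn, hn⟩ := hub N
      obtain ⟨m, hnm, hm⟩ := nat_mem_weakOneStep (hDsub hn)
      exact ⟨m, lt_of_lt_of_le hNn hnm, ⟨m, rfl, hm⟩⟩
    have hEsub : E ⊆ dw A := by rintro x ⟨m, rfl, hm⟩; exact hm
    have hEne : E.Nonempty := by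
      obtain ⟨m, _, hm⟩ := key 0
      exact ⟨L₈.nat m, hm⟩
    have hEdir : DirectedOn (· ≤ ·) E := by
      rintro x ⟨mx, rfl, hx⟩ y ⟨my, rfl, hy⟩
      rcases le_total mx my with h | h
      · exact ⟨L₈.nat my, ⟨my, rfl, hy⟩, nat_le_nat.mpr h, le_refl _⟩
      · exact ⟨L₈.nat mx, ⟨mx, rfl, hx⟩, le_refl _, nat_le_nat.mpr h⟩
    have hElub : IsLUB E L₈.omega := by
      constructor
      · intro x _; exact le_omega x
      · intro b hb
        cases b with
        | nat N =>
          obtain ⟨m, hNm, hm⟩ := key N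
          exact absurd (nat_le_nat.mp (hb hm)) (by omega)
        | omega => exact le_refl _
        | a =>
          obtain ⟨m, _, hm⟩ := key 0
          exact absurd (hb hm) (not_nat_le_a m)
    exact ⟨E, hEsub, hEne, hEdir, L₈.omega, hElub, le_refl _⟩

lemma dw_range_nat : dw (Set.range L₈.nat) = Set.range L₈.nat := by
  ext x
  constructor
  · rintro ⟨b, ⟨k, rfl⟩, hxb⟩
    cases x with
    | nat j => exact ⟨j, rfl⟩
    | omega => exact absurd hxb (not_omega_le_nat k)
    | a => exact absurd hxb (not_a_le_nat k)
  · rintro ⟨k, rfl⟩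
    exact ⟨L₈.nat k, ⟨k, rfl⟩, le_refl _⟩

lemma isLUB_range_nat : IsLUB (Set.range L₈.nat) L₈.omega := by
  constructor
  · intro x _; exact le_omega x
  · intro b hb
    cases b with
    | nat N => exact absurd (nat_le_nat.mp (hb ⟨N + 1, rfl⟩)) (by omega)
    | omega => exact le_refl _
    | a => exact absurd (hb ⟨0, rfl⟩) (not_nat_le_a 0)

lemma range_nat_directed : DirectedOn (· ≤ ·) (Set.range L₈.nat) := by
  rintro x ⟨mx, rfl⟩ y ⟨my, rfl⟩
  rcases le_total mx my with h | h
  · exact ⟨L₈.nat my, ⟨my, rfl⟩, nat_le_nat.mpr h, le_refl _⟩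
  · exact ⟨L₈.nat mx, ⟨mx, rfl⟩, le_refl _, nat_le_nat.mpr h⟩

end L₈

/-- `L₈` has weak one-step closure but not one-step closure; moreover
`ℕ' = ℕ ∪ {ω}` while `ℕ'' = L`. -/
theorem L₈_weakOneStep_not_oneStep :
    HasWeakOneStepClosure L₈ ∧ ¬ HasOneStepClosure L₈ ∧
      oneStep (Set.range L₈.nat) = Set.range L₈.nat ∪ {L₈.omega} ∧
      weakOneStep (Set.range L₈.nat) = Set.univ := by
  have hweak : HasWeakOneStepClosure L₈ := by
    intro A
    exact subset_antisymm
      (scottCl_subset_of (self_subset_weakOneStep A) (weakOneStep_isLowerSet A)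
        (L₈.weakOneStep_dirSupClosed A))
      (weakOneStep_subset_scottCl A)
  have hone : oneStep (Set.range L₈.nat) = Set.range L₈.nat ∪ {L₈.omega} := by
    ext x
    constructor
    · rintro ⟨D, hDA, hne, hdir, hx⟩
      rw [L₈.dw_range_nat] at hDA
      rcases L₈.lub_cases hne hdir hx with h | ⟨rfl, _⟩
      · exact Or.inl (hDA h)
      · exact Or.inr rfl
    · rintro (⟨k, rfl⟩ | hx)
      · refine ⟨{L₈.nat k}, ?_, ⟨_, rfl⟩, ?_, isLUB_singleton⟩
        · exact fun z hz => ⟨L₈.nat k, ⟨k, rfl⟩, le_of_eq hz⟩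
        · exact fun u hu v hv => ⟨L₈.nat k, rfl, le_of_eq hu, le_of_eq hv⟩
      · rcases hx with rfl
        refine ⟨Set.range L₈.nat, ?_, ⟨L₈.nat 0, 0, rfl⟩, L₈.range_nat_directed,
          L₈.isLUB_range_nat⟩
        rw [L₈.dw_range_nat]
  have hweakrange : weakOneStep (Set.range L₈.nat) = Set.univ := by
    ext x
    simp only [Set.mem_univ, iff_true]
    refine ⟨Set.range L₈.nat, ?_, ⟨L₈.nat 0, 0, rfl⟩, L₈.range_nat_directed,
      L₈.omega, L₈.isLUB_range_nat, L₈.le_omega x⟩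
    rw [L₈.dw_range_nat]
  refine ⟨hweak, ?_, hone, hweakrange⟩
  intro h
  have h1 : scottCl (Set.range L₈.nat) = Set.univ := (hweak _).trans hweakrange
  have h2 := h (Set.range L₈.nat)
  rw [h1, hone] at h2
  have : L₈.a ∈ Set.range L₈.nat ∪ {L₈.omega} := h2 ▸ Set.mem_univ L₈.a
  rcases this with ⟨k, hk⟩ | hx
  · exact L₈.noConfusion hk
  · exact L₈.noConfusion hx
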